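/- Let (γ_k) be defined by γ_0=0, γ_1=1, γ_{k+1}=rγ_k − γ_{k−1} for r ∈ ℂ. Then for every integer k: (2 − r) γ_{k+1} γ_k = (1 + γ_k − γ_{k+1})(1 + γ_{k+1} − γ_k). -/

import Mathlib

theorem stmt_13 (r : ℂ) (γ : ℤ → ℂ) (h0 : γ 0 = 0) (h1 : γ 1 = 1)
    (hrec : ∀ k : ℤ, γ (k + 1) = r * γ k - γ (k - 1)) :
    ∀ k : ℤ, (2 - r) * γ (k + 1) * γ k =
      (1 + γ k - γ (k + 1)) * (1 + γ (k + 1) - γ k) := by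
  suffices h : ∀ k : ℤ, γ (k + 1) * γ (k + 1) - r * γ (k + 1) * γ k + γ k * γ k = 1 by
    intro k
    linear_combination (h k)
  intro k
  induction k using Int.induction_on with
  | zero => simp [h0, h1]
  | succ k ih =>
      have hr := hrec (k + 1)
      simp only [add_sub_cancel_right] at hr
      rw [hr]
      linear_combination ih
  | pred k ih =>
      have hr := hrec (-k)
      have e : (-(k : ℤ) - 1 + 1) = -k := by ring
      rw [e]
      have hc : γ (-(k : ℤ) - 1) = r * γ (-k) - γ (-k + 1) := by linear_combination hr
      rw [hc]
      linear_combination ih
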